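/- In finite Hex (a finite positional game with no draws satisfying the board symmetry exchanging the players' sides), the second player has no winning strategy; consequently the first player has a winning strategy. -/

import Mathlib

variable {B : Type}

/-- The vertices marked by the first player over the play `s` (the moves at the even
stages; a vertex counts as marked by the player who marks it first). -/
def FirstMoves (s : ℕ → B) : Set B :=
  {b | ∃ i : ℕ, i % 2 = 0 ∧ s i = b ∧ ∀ j < i, s j ≠ b}

/-- The vertices marked by the second player over the play `s` (the moves at the odd
stages; a vertex counts as marked by the player who marks it first). -/
def SecondMoves (s : ℕ → B) : Set B :=
  {b | ∃ i : ℕ, i % 2 = 1 ∧ s i = b ∧ ∀ j < i, s j ≠ b}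

/-- A valid play: the players always mark a previously unmarked vertex, as long as an
unmarked vertex remains. -/
def ValidPlay (s : ℕ → B) : Prop :=
  ∀ n : ℕ, (∃ b : B, ∀ m < n, s m ≠ b) → ∀ m < n, s m ≠ s n

/-- The play `s` conforms to the strategy `σ` for the first player: at each even stage
the move made is the one prescribed by `σ` on the history so far. -/
def ConformsFirst (σ : List B → B) (s : ℕ → B) : Prop :=
  ∀ n : ℕ, n % 2 = 0 → s n = σ ((List.range n).map s)

/-- The play `s` conforms to the strategy `τ` for the second player: at each odd stage
the move made is the one prescribed by `τ` on the history so far. -/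
def ConformsSecond (τ : List B → B) (s : ℕ → B) : Prop :=
  ∀ n : ℕ, n % 2 = 1 → s n = τ ((List.range n).map s)

/-- A legal strategy always chooses a previously unchosen vertex, as long as one exists. -/
def LegalStrat (σ : List B → B) : Prop :=
  ∀ l : List B, (∃ b : B, b ∉ l) → σ l ∉ l

namespace SS

open Finset

section Game
variable [DecidableEq B]

/-- `force F k t A D` : the player owning the stones `A` can force the final position of
their stones (when the `k` remaining cells have been filled) to contain a member of `F`;
`t` records whether it is that player's turn. -/
def force (F : Set (Set B)) : ℕ → Bool → Finset B → Finset B → Prop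
  | 0, _, A, _ => ∃ f ∈ F, f ⊆ ↑A
  | (k+1), true, A, D => ∃ b, b ∉ A ∪ D ∧ force F k false (insert b A) D
  | (k+1), false, A, D => ∀ b, b ∉ A ∪ D → force F k true A (insert b D)

variable [Fintype B]

lemma compl_nonempty {A D : Finset B} (h : (A ∪ D).card < Fintype.card B) :
    ∃ c, c ∉ A ∪ D := by
  have : ((A ∪ D)ᶜ : Finset B).Nonempty := Finset.card_pos.mp (by rw [Finset.card_compl]; omega)
  obtain ⟨c, hc⟩ := this
  exact ⟨c, Finset.mem_compl.mp hc⟩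

lemma extra_steal (F : Set (Set B)) : ∀ k : ℕ,
    (∀ t A D (c : B), (A ∪ D).card + (k+1) = Fintype.card B →
      force F (k+1) t A D → c ∉ A ∪ D → force F k t (insert c A) D)
    ∧ (∀ A D : Finset B, (A ∪ D).card + (k+1) = Fintype.card B →
      force F (k+1) false A D → force F (k+1) true A D) := by
  intro k
  induction k with
  | zero =>
    constructor
    · rintro t A D c hcard h hc
      cases t with
      | true =>
        obtain ⟨b, hb, hfb⟩ := h
        have hbc : b = c := by
          by_contra hne
          have h1 : insert c (A ∪ D) ⊂ insert b (insert c (A ∪ D)) :=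
            Finset.ssubset_insert (by simp [hne, hb])
          have h2 : (insert b (insert c (A ∪ D))).card ≤ Fintype.card B :=
            Finset.card_le_univ _
          have h3 : (insert c (A ∪ D)).card = (A ∪ D).card + 1 :=
            Finset.card_insert_of_notMem hc
          have h4 := Finset.card_lt_card h1
          omega
        subst hbc
        exact hfb
      | false =>
        obtain ⟨f, hf, hsub⟩ := h c hc
        exact ⟨f, hf, hsub.trans (by simp [Set.subset_insert])⟩
    · intro A D hcard h
      obtain ⟨c, hc⟩ := compl_nonempty (A := A) (D := D) (by omega)
      refine ⟨c, hc, ?_⟩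
      obtain ⟨f, hf, hsub⟩ := h c hc
      exact ⟨f, hf, hsub.trans (by simp [Set.subset_insert])⟩
  | succ k ih =>
    have E : ∀ t A D (c : B), (A ∪ D).card + (k+2) = Fintype.card B →
        force F (k+2) t A D → c ∉ A ∪ D → force F (k+1) t (insert c A) D := by
      rintro t A D c hcard h hc
      have hcA : c ∉ A := fun h' => hc (Finset.mem_union_left _ h')
      cases t with
      | true =>
        obtain ⟨b, hb, hfb⟩ := h
        by_cases hbc : b = c
        · subst hbc
          exact ih.2 (insert b A) D (by rw [Finset.insert_union,
              Finset.card_insert_of_notMem hb]; omega) hfb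
        · refine ⟨b, by simp only [Finset.mem_union, Finset.mem_insert, not_or] at hb ⊢; tauto, ?_⟩
          have := ih.1 false (insert b A) D c
            (by rw [Finset.insert_union, Finset.card_insert_of_notMem hb]; omega) hfb
            (by simp only [Finset.mem_union, Finset.mem_insert, not_or] at hc ⊢
                exact ⟨⟨fun h' => hbc h'.symm, hc.1⟩, hc.2⟩)
          rwa [Finset.insert_comm] at this
      | false =>
        intro b hb
        simp only [Finset.mem_union, Finset.mem_insert, not_or] at hb
        have hbAD : b ∉ A ∪ D := by simp only [Finset.mem_union, not_or]; tauto
        have hbc : b ≠ c := hb.1.1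
        have := ih.1 true A (insert b D) c
          (by rw [Finset.union_insert, Finset.card_insert_of_notMem hbAD]; omega)
          (h b hbAD)
          (by simp only [Finset.mem_union, Finset.mem_insert, not_or] at hc ⊢
              exact ⟨hc.1, fun h' => hbc h'.symm, hc.2⟩)
        exact this
    refine ⟨E, ?_⟩
    intro A D hcard h
    obtain ⟨c, hc⟩ := compl_nonempty (A := A) (D := D) (by omega)
    exact ⟨c, hc, E false A D c hcard h hc⟩

lemma dual (F S : Set (Set B))
    (hnotie : ∀ cR : Set B, Xor' (∃ f ∈ F, f ⊆ cR) (∃ t ∈ S, t ⊆ cRᶜ)) :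
    ∀ (k : ℕ) (t : Bool) (A D : Finset B), (A ∪ D).card + k = Fintype.card B →
      ¬ force F k t A D → force S k (!t) D A := by
  intro k
  induction k with
  | zero =>
    intro t A D hcard h
    have huniv : (A ∪ D : Finset B) = univ := Finset.eq_univ_of_card _ (by omega)
    have hcompl : (↑A : Set B)ᶜ ⊆ ↑D := by
      intro x hx
      have : x ∈ A ∪ D := huniv ▸ Finset.mem_univ x
      rcases Finset.mem_union.mp this with h' | h'
      · exact absurd h' hx
      · exact h'
    rcases hnotie ↑A with ⟨h1, _⟩ | ⟨h2, _⟩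
    · exact absurd h1 h
    · obtain ⟨t', ht', hsub⟩ := h2
      exact ⟨t', ht', hsub.trans hcompl⟩
  | succ k ih =>
    intro t A D hcard h
    cases t with
    | true =>
      intro b hb
      have hb' : b ∉ A ∪ D := by simp only [Finset.mem_union, not_or] at hb ⊢; tauto
      have : ¬ force F k false (insert b A) D := fun hf => h ⟨b, hb', hf⟩
      have := ih false (insert b A) D
        (by rw [Finset.insert_union, Finset.card_insert_of_notMem hb']; omega) this
      exact this
    | false =>
      obtain ⟨b, hb, hnf⟩ : ∃ b, b ∉ A ∪ D ∧ ¬ force F k true A (insert b D) := by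
        by_contra hno
        push_neg at hno
        exact h fun b hb => hno b hb
      refine ⟨b, by simp only [Finset.mem_union, not_or] at hb ⊢; tauto, ?_⟩
      exact ih true A (insert b D)
        (by rw [Finset.union_insert, Finset.card_insert_of_notMem hb]; omega) hnf

omit [Fintype B] in
lemma mirror (S F : Set (Set B)) (g : B ≃ B) (hgS : ∀ t ∈ S, g '' t ∈ F) :
    ∀ (k : ℕ) (t : Bool) (A D : Finset B),
      force S k t A D → force F k t (A.image g) (D.image g) := by
  intro k
  induction k with
  | zero =>
    rintro t A D ⟨u, hu, hsub⟩
    exact ⟨g '' u, hgS u hu, by rw [Finset.coe_image]; exact Set.image_mono hsub⟩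
  | succ k ih =>
    rintro t A D h
    cases t with
    | true =>
      obtain ⟨b, hb, hf⟩ := h
      refine ⟨g b, ?_, ?_⟩
      · simp only [Finset.mem_union, Finset.mem_image, not_or] at hb ⊢
        constructor <;> rintro ⟨x, hx, hgx⟩ <;>
          [exact hb.1 (g.injective hgx ▸ hx); exact hb.2 (g.injective hgx ▸ hx)]
      · have := ih false (insert b A) D hf
        rwa [Finset.image_insert] at this
    | false =>
      intro b' hb'
      have hb : g.symm b' ∉ A ∪ D := by
        intro hmem
        apply hb'
        rcases Finset.mem_union.mp hmem with h' | h'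
        · exact Finset.mem_union_left _ (Finset.mem_image.mpr ⟨_, h', g.apply_symm_apply b'⟩)
        · exact Finset.mem_union_right _ (Finset.mem_image.mpr ⟨_, h', g.apply_symm_apply b'⟩)
      have := ih true A (insert (g.symm b') D) (h _ hb)
      rwa [Finset.image_insert, g.apply_symm_apply] at this

lemma main_force [Nonempty B] (F S : Set (Set B))
    (hnotie : ∀ cR : Set B, Xor' (∃ f ∈ F, f ⊆ cR) (∃ t ∈ S, t ⊆ cRᶜ))
    (g : B ≃ B) (hgS : ∀ t ∈ S, g '' t ∈ F) :
    force F (Fintype.card B) true (∅ : Finset B) ∅ := by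
  by_contra h
  have h1 : force S (Fintype.card B) false (∅ : Finset B) ∅ := by
    have := dual F S hnotie (Fintype.card B) true ∅ ∅ (by simp) h
    simpa using this
  have h2 : force F (Fintype.card B) false (∅ : Finset B) ∅ := by
    have := mirror S F g hgS (Fintype.card B) false ∅ ∅ h1
    simpa using this
  obtain ⟨k, hk⟩ : ∃ k, Fintype.card B = k + 1 :=
    ⟨Fintype.card B - 1, by have := Fintype.card_pos (α := B); omega⟩
  rw [hk] at h h2
  exact h ((extra_steal F k).2 ∅ ∅ (by simp [← hk]) h2)

/-- Elements of `l` at positions congruent to `r` mod 2. -/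
def part (d : B) (r : ℕ) (l : List B) : Finset B :=
  ((Finset.range l.length).filter (fun i => i % 2 = r)).image (fun i => l.getD i d)

omit [Fintype B] in
lemma part_map (d : B) (s : ℕ → B) (n r : ℕ) :
    part d r ((List.range n).map s) = ((Finset.range n).filter (fun i => i % 2 = r)).image s := by
  unfold part
  rw [List.length_map, List.length_range]
  refine Finset.image_congr ?_
  intro i hi
  simp only [Finset.mem_coe, Finset.mem_filter, Finset.mem_range] at hi
  show (List.map s (List.range n)).getD i d = s i
  rw [List.getD_eq_getElem _ _ (by simpa using hi.1)]
  simp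

omit [Fintype B] in
lemma mem_part_union (d : B) (l : List B) (b : B) :
    b ∈ part d 0 l ∪ part d 1 l ↔ b ∈ l := by
  simp only [Finset.mem_union, part, Finset.mem_image, Finset.mem_filter, Finset.mem_range]
  constructor
  · rintro (⟨i, ⟨hi, _⟩, rfl⟩ | ⟨i, ⟨hi, _⟩, rfl⟩) <;>
      · show l.getD i d ∈ l
        rw [List.getD_eq_getElem _ _ hi]
        exact List.getElem_mem _
  · intro hb
    obtain ⟨i, hi, hget⟩ := List.mem_iff_getElem.mp hb
    have hd : l.getD i d = b := by rw [List.getD_eq_getElem _ _ hi]; exact hget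
    rcases Nat.mod_two_eq_zero_or_one i with h | h
    · exact Or.inl ⟨i, ⟨hi, h⟩, hd⟩
    · exact Or.inr ⟨i, ⟨hi, h⟩, hd⟩

omit [Fintype B] in
lemma part_succ (d : B) (s : ℕ → B) (n r : ℕ) :
    part d r ((List.range (n+1)).map s) =
      if n % 2 = r then insert (s n) (part d r ((List.range n).map s))
      else part d r ((List.range n).map s) := by
  rw [part_map, part_map, Finset.range_add_one, Finset.filter_insert]
  split
  · rw [Finset.image_insert]
  · rfl

open Classical in
/-- The first player's strategy obtained from the forcing predicate. -/
noncomputable def strat (F : Set (Set B)) (d : B) : List B → B :=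
  fun l =>
    if h : ∃ b, b ∉ part d 0 l ∪ part d 1 l ∧
        force F (Fintype.card B - (l.length + 1)) false (insert b (part d 0 l)) (part d 1 l)
    then h.choose
    else if h2 : ∃ b : B, b ∉ l then h2.choose else d

lemma strat_legal (F : Set (Set B)) (d : B) : LegalStrat (strat F d) := by
  intro l hl
  unfold strat
  split
  · rename_i h
    intro hmem
    exact h.choose_spec.1 ((mem_part_union d l _).mpr hmem)
  · exact hl.choose_spec

lemma strat_wins (F : Set (Set B)) (d : B)
    (hforce : force F (Fintype.card B) true (∅ : Finset B) ∅) :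
    ∀ s : ℕ → B, ValidPlay s → ConformsFirst (strat F d) s →
      ∃ f ∈ F, f ⊆ FirstMoves s := by
  intro s hv hc
  set N := Fintype.card B with hN
  have hmem : ∀ n (b : B), b ∈ part d 0 ((List.range n).map s) ∪ part d 1 ((List.range n).map s)
      ↔ ∃ m, m < n ∧ s m = b := by
    intro n b
    rw [mem_part_union]
    simp [List.mem_map]
  have hcard : ∀ n, (part d 0 ((List.range n).map s) ∪ part d 1 ((List.range n).map s)).card ≤ n := by
    intro n
    have hsub : part d 0 ((List.range n).map s) ∪ part d 1 ((List.range n).map s)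
        ⊆ (Finset.range n).image s := by
      intro b hb
      obtain ⟨m, hm, hsm⟩ := (hmem n b).mp hb
      exact Finset.mem_image.mpr ⟨m, Finset.mem_range.mpr hm, hsm⟩
    calc _ ≤ ((Finset.range n).image s).card := Finset.card_le_card hsub
    _ ≤ (Finset.range n).card := Finset.card_image_le
    _ = n := Finset.card_range n
  have key : ∀ n, n ≤ N → (∀ i, i < n → ∀ j, j < i → s j ≠ s i) ∧
      force F (N - n) (n % 2 == 0) (part d 0 ((List.range n).map s))
        (part d 1 ((List.range n).map s)) := by
    intro n
    induction n with
    | zero =>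
      intro _
      refine ⟨fun i hi => absurd hi (by omega), ?_⟩
      simpa [part] using hforce
    | succ n ih =>
      intro hn1
      have hn : n < N := hn1
      obtain ⟨hinj, hf⟩ := ih (le_of_lt hn)
      have hNsub : N - n = (N - (n+1)) + 1 := by omega
      have hfresh : s n ∉ part d 0 ((List.range n).map s) ∪ part d 1 ((List.range n).map s)
          ∧ force F (N - (n+1)) (((n+1) % 2 == 0))
            (part d 0 ((List.range (n+1)).map s)) (part d 1 ((List.range (n+1)).map s)) := by
        rcases Nat.mod_two_eq_zero_or_one n with hpar | hpar
        · -- first player's move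
          have ht : (n % 2 == 0) = true := by rw [hpar]; rfl
          rw [ht, hNsub] at hf
          obtain ⟨b, hb, hfb⟩ := hf
          have hcond : ∃ b, b ∉ part d 0 ((List.range n).map s) ∪ part d 1 ((List.range n).map s) ∧
              force F (N - (((List.range n).map s).length + 1)) false
                (insert b (part d 0 ((List.range n).map s))) (part d 1 ((List.range n).map s)) := by
            refine ⟨b, hb, ?_⟩
            rw [List.length_map, List.length_range]
            exact hfb
          have hsn : s n = hcond.choose := by
            have h' := hc n hpar
            rw [h']
            unfold strat
            rw [dif_pos hcond]
          have hspec := hcond.choose_spec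
          rw [← hsn] at hspec
          simp only [List.length_map, List.length_range] at hspec
          refine ⟨hspec.1, ?_⟩
          rw [part_succ, part_succ, if_pos hpar, if_neg (by omega)]
          have ht' : ((n+1) % 2 == 0) = false := by
            have : (n+1) % 2 = 1 := by omega
            rw [this]; rfl
          rw [ht']
          exact hspec.2
        · -- second player's move
          have ht : (n % 2 == 0) = false := by rw [hpar]; rfl
          rw [ht, hNsub] at hf
          have hex : ∃ b : B, ∀ m < n, s m ≠ b := by
            obtain ⟨c, hcm⟩ := compl_nonempty (lt_of_le_of_lt (hcard n) hn)
            exact ⟨c, fun m hm hsm => hcm ((hmem n c).mpr ⟨m, hm, hsm⟩)⟩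
          have hfr : s n ∉ part d 0 ((List.range n).map s) ∪ part d 1 ((List.range n).map s) := by
            intro hmem'
            obtain ⟨m, hm, hsm⟩ := (hmem n _).mp hmem'
            exact hv n hex m hm hsm
          refine ⟨hfr, ?_⟩
          rw [part_succ, part_succ, if_neg (by omega), if_pos hpar]
          have ht' : ((n+1) % 2 == 0) = true := by
            have : (n+1) % 2 = 0 := by omega
            rw [this]; rfl
          rw [ht']
          exact hf (s n) hfr
      refine ⟨?_, hfresh.2⟩
      intro i hi j hj
      rcases Nat.lt_succ_iff_lt_or_eq.mp hi with hi' | rfl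
      · exact hinj i hi' j hj
      · intro hsj
        exact hfresh.1 ((hmem i _).mpr ⟨j, hj, hsj⟩)
  obtain ⟨hinj, hf⟩ := key N le_rfl
  rw [Nat.sub_self] at hf
  obtain ⟨f, hfF, hsub⟩ := hf
  refine ⟨f, hfF, hsub.trans ?_⟩
  intro b hb
  rw [Finset.mem_coe, part_map] at hb
  obtain ⟨i, hi, hsi⟩ := Finset.mem_image.mp hb
  rw [Finset.mem_filter, Finset.mem_range] at hi
  exact ⟨i, hi.2, hsi, fun j hj hsj => hinj i hi.1 j hj (hsj.trans hsi.symm)⟩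

end Game

/-- The history of the play generated by the combined move function `μ`. -/
def hist (μ : List B → B) : ℕ → List B
  | 0 => []
  | n+1 => hist μ n ++ [μ (hist μ n)]

/-- The play generated by the combined move function `μ`. -/
def play (μ : List B → B) (n : ℕ) : B := μ (hist μ n)

lemma hist_eq (μ : List B → B) : ∀ n, (List.range n).map (play μ) = hist μ n := by
  intro n
  induction n with
  | zero => rfl
  | succ n ih => rw [List.range_succ, List.map_append, ih]; rfl

lemma hist_length (μ : List B → B) (n : ℕ) : (hist μ n).length = n := by
  rw [← hist_eq]; simp

lemma firstMoves_disjoint (s : ℕ → B) : ∀ b ∈ SecondMoves s, b ∉ FirstMoves s := by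
  rintro b ⟨i, hi1, hi2, hi3⟩ ⟨i', hi'1, hi'2, hi'3⟩
  rcases lt_trichotomy i i' with h | h | h
  · exact hi'3 i h hi2
  · subst h; omega
  · exact hi3 i' h hi'2

end SS

theorem stmt11 (B : Type) [Fintype B] (F S : Set (Set B))
    (hnotie : ∀ cR : Set B, Xor' (∃ f ∈ F, f ⊆ cR) (∃ t ∈ S, t ⊆ cRᶜ))
    (g : B ≃ B) (hgS : ∀ t ∈ S, g '' t ∈ F) (hgF : ∀ f ∈ F, g '' f ∈ S) :
    (¬ ∃ τ : List B → B, LegalStrat τ ∧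
        ∀ s : ℕ → B, ValidPlay s → ConformsSecond τ s → ∃ t ∈ S, t ⊆ SecondMoves s) ∧
    (∃ σ : List B → B, LegalStrat σ ∧
        ∀ s : ℕ → B, ValidPlay s → ConformsFirst σ s → ∃ f ∈ F, f ⊆ FirstMoves s) := by
  classical
  rcases isEmpty_or_nonempty B with hB | hB
  · exfalso
    rcases hnotie ∅ with ⟨⟨f, hf, _⟩, hns⟩ | ⟨⟨t, ht, _⟩, hnf⟩
    · exact hns ⟨g '' f, hgF f hf, fun x hx => (IsEmpty.false x).elim⟩
    · exact hnf ⟨g '' t, hgS t ht, fun x hx => (IsEmpty.false x).elim⟩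
  · letI := Classical.decEq B
    have hforce := SS.main_force F S hnotie g hgS
    obtain ⟨d⟩ := hB
    have hwin := SS.strat_wins F d hforce
    have hleg := SS.strat_legal F d
    refine ⟨?_, SS.strat F d, hleg, hwin⟩
    rintro ⟨τ, hτl, hτw⟩
    set μ : List B → B := fun l => if l.length % 2 = 1 then τ l else SS.strat F d l with hμ
    set s : ℕ → B := SS.play μ with hs
    have hrange : ∀ n, (List.range n).map s = SS.hist μ n := SS.hist_eq μ
    have hmemhist : ∀ (n : ℕ) (b : B), b ∈ SS.hist μ n ↔ ∃ m, m < n ∧ s m = b := by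
      intro n b
      rw [← hrange]
      simp [List.mem_map]
    have hμval : ∀ n : ℕ, s n = μ (SS.hist μ n) := fun n => rfl
    have hvalid : ValidPlay s := by
      intro n hex m hm heq
      obtain ⟨b, hb⟩ := hex
      have hbl : b ∉ SS.hist μ n := fun hmem => by
        obtain ⟨m', hm', hsm⟩ := (hmemhist n b).mp hmem
        exact hb m' hm' hsm
      have hμn : s n ∉ SS.hist μ n := by
        rw [hμval n, hμ]
        by_cases hpar : (SS.hist μ n).length % 2 = 1
        · simp only [SS.hist_length] at hpar
          simpa [hpar, SS.hist_length] using hτl (SS.hist μ n) ⟨b, hbl⟩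
        · simp only [SS.hist_length] at hpar
          simpa [hpar, SS.hist_length] using hleg (SS.hist μ n) ⟨b, hbl⟩
      exact hμn (heq ▸ (hmemhist n (s m)).mpr ⟨m, hm, rfl⟩)
    have hconf1 : ConformsFirst (SS.strat F d) s := by
      intro n hpar
      rw [hrange, hμval n, hμ]
      have : ¬ ((SS.hist μ n).length % 2 = 1) := by rw [SS.hist_length]; omega
      simp [SS.hist_length, hpar]
    have hconf2 : ConformsSecond τ s := by
      intro n hpar
      rw [hrange, hμval n, hμ]
      have : (SS.hist μ n).length % 2 = 1 := by rw [SS.hist_length]; omega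
      simp [SS.hist_length, hpar]
    obtain ⟨f, hfF, hf1⟩ := hwin s hvalid hconf1
    obtain ⟨t, htS, ht2⟩ := hτw s hvalid hconf2
    rcases hnotie (FirstMoves s) with ⟨_, hq⟩ | ⟨_, hp⟩
    · exact hq ⟨t, htS, fun x hx => SS.firstMoves_disjoint s x (ht2 hx)⟩
    · exact hp ⟨f, hfF, hf1⟩
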